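/- For the three-web on the domain {(x¹,x²,y¹,y²) ∈ ℝ⁴ : x¹y² ≠ 1 and x¹y² ≠ −1} given by f¹ = x¹ + y¹ + (1/2)(x¹)²y², f² = x² + y² − (1/2)x¹(y²)², with Δ := 1 + x¹y², the torsion covector is a₁ = y²/(Δ(2−Δ)) and a₂ = x¹/(Δ(2−Δ)); in particular the web is not isoclinicly geodesic off the set x¹ = y² = 0. -/

import Mathlib

noncomputable section

open Matrix

/-- Partial derivative of `g` with respect to the `j`-th coordinate at the point `x`. -/
def pd (j : Fin 2) (g : (Fin 2 → ℝ) → ℝ) (x : Fin 2 → ℝ) : ℝ :=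
  deriv (fun t => g (Function.update x j t)) (x j)

variable (f : Fin 2 → (Fin 2 → ℝ) → (Fin 2 → ℝ) → ℝ)

/-- Jacobian matrix `f̄ = (∂fⁱ/∂xʲ)` with respect to the first group of variables. -/
def fbar (x y : Fin 2 → ℝ) : Matrix (Fin 2) (Fin 2) ℝ :=
  Matrix.of fun i j => pd j (fun x' => f i x' y) x

/-- Jacobian matrix `f̃ = (∂fⁱ/∂yʲ)` with respect to the second group of variables. -/
def ftil (x y : Fin 2 → ℝ) : Matrix (Fin 2) (Fin 2) ℝ :=
  Matrix.of fun i j => pd j (fun y' => f i x y') y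

/-- Mixed second partial derivative `∂²fⁱ/∂xˡ∂yᵐ`. -/
def d2 (i l m : Fin 2) (x y : Fin 2 → ℝ) : ℝ :=
  pd m (fun y' => pd l (fun x' => f i x' y') x) y

/-- Connection coefficients
`Γⁱⱼₖ = −∑_{l,m} (∂²fⁱ/∂xˡ∂yᵐ) ḡˡⱼ g̃ᵐₖ`, where `ḡ = f̄⁻¹`, `g̃ = f̃⁻¹`. -/
def Gam (i j k : Fin 2) (x y : Fin 2 → ℝ) : ℝ :=
  - ∑ l : Fin 2, ∑ m : Fin 2,
      d2 f i l m x y * (fbar f x y)⁻¹ l j * (ftil f x y)⁻¹ m k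

/-- Torsion covector `aⱼ = ∑ₖ (Γᵏⱼₖ − Γᵏₖⱼ)`. -/
def aCov (j : Fin 2) (x y : Fin 2 → ℝ) : ℝ :=
  ∑ k : Fin 2, (Gam f k j k x y - Gam f k k j x y)

/-- Covariant derivative `p_{ik} = ∑ₘ (∂aᵢ/∂xᵐ) ḡᵐₖ − ∑ⱼ aⱼ Γʲₖᵢ`. -/
def pCov (i k : Fin 2) (x y : Fin 2 → ℝ) : ℝ :=
  (∑ m : Fin 2, pd m (fun x' => aCov f i x' y) x * (fbar f x y)⁻¹ m k)
    - ∑ j : Fin 2, aCov f j x y * Gam f j k i x y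

/-- Covariant derivative `q_{ik} = ∑ₘ (∂aᵢ/∂yᵐ) g̃ᵐₖ − ∑ⱼ aⱼ Γʲᵢₖ`. -/
def qCov (i k : Fin 2) (x y : Fin 2 → ℝ) : ℝ :=
  (∑ m : Fin 2, pd m (fun y' => aCov f i x y') y * (ftil f x y)⁻¹ m k)
    - ∑ j : Fin 2, aCov f j x y * Gam f j i k x y

/-- Isoclinicity invariant `p = (p₁₂ − p₂₁)/2`. -/
def pIso (x y : Fin 2 → ℝ) : ℝ := (pCov f 0 1 x y - pCov f 1 0 x y) / 2

/-- Isoclinicity invariant `q = (q₁₂ − q₂₁)/2`. -/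
def qIso (x y : Fin 2 → ℝ) : ℝ := (qCov f 0 1 x y - qCov f 1 0 x y) / 2


/-- The web `f¹ = x¹ + y¹ + (1/2)(x¹)²y²`, `f² = x² + y² − (1/2)x¹(y²)²`.
(Indices: `x 0 ↦ x¹`, `x 1 ↦ x²`, `y 0 ↦ y¹`, `y 1 ↦ y²`.) -/
noncomputable def webA : Fin 2 → (Fin 2 → ℝ) → (Fin 2 → ℝ) → ℝ :=
  ![fun x y => x 0 + y 0 + (1/2) * (x 0)^2 * y 1,
    fun x y => x 1 + y 1 - (1/2) * x 0 * (y 1)^2]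


lemma pd_f0x0 (x y : Fin 2 → ℝ) : pd 0 (fun x' => webA 0 x' y) x = 1 + x 0 * y 1 := by
  unfold pd webA
  simp only [Matrix.cons_val_zero, Function.update_self,
    Function.update_of_ne (show (1:Fin 2) ≠ 0 by decide)]
  have h : HasDerivAt (fun t:ℝ => t + y 0 + 1/2 * t^2 * y 1) (1 + x 0 * y 1) (x 0) := by
    have := ((hasDerivAt_id (x 0)).add_const (y 0)).add
      (((hasDerivAt_pow 2 (x 0)).const_mul (1/2:ℝ)).mul_const (y 1))
    exact this.congr_deriv (by ring)
  exact h.deriv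

lemma pd_f0x1 (x y : Fin 2 → ℝ) : pd 1 (fun x' => webA 0 x' y) x = 0 := by
  unfold pd webA
  simp only [Matrix.cons_val_zero, Function.update_self,
    Function.update_of_ne (show (0:Fin 2) ≠ 1 by decide)]
  exact deriv_const _ _

lemma pd_f0y0 (x y : Fin 2 → ℝ) : pd 0 (fun y' => webA 0 x y') y = 1 := by
  unfold pd webA
  simp only [Matrix.cons_val_zero, Function.update_self,
    Function.update_of_ne (show (1:Fin 2) ≠ 0 by decide)]
  have h : HasDerivAt (fun t:ℝ => x 0 + t + 1/2 * (x 0)^2 * y 1) 1 (y 0) := by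
    have := (((hasDerivAt_id (y 0)).const_add (x 0)).add_const (1/2 * (x 0)^2 * y 1))
    exact this
  exact h.deriv

lemma pd_f0y1 (x y : Fin 2 → ℝ) : pd 1 (fun y' => webA 0 x y') y = 1/2 * (x 0)^2 := by
  unfold pd webA
  simp only [Matrix.cons_val_zero, Function.update_self,
    Function.update_of_ne (show (0:Fin 2) ≠ 1 by decide)]
  have h : HasDerivAt (fun t:ℝ => x 0 + y 0 + 1/2 * (x 0)^2 * t) (1/2 * (x 0)^2) (y 1) := by
    have := ((hasDerivAt_id (y 1)).const_mul (1/2 * (x 0)^2)).const_add (x 0 + y 0)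
    exact this.congr_deriv (by ring)
  exact h.deriv

lemma pd_f1x0 (x y : Fin 2 → ℝ) : pd 0 (fun x' => webA 1 x' y) x = -(1/2) * (y 1)^2 := by
  unfold pd webA
  simp only [Matrix.cons_val_one, Matrix.head_cons, Function.update_self,
    Function.update_of_ne (show (1:Fin 2) ≠ 0 by decide)]
  have h : HasDerivAt (fun t:ℝ => x 1 + y 1 - 1/2 * t * (y 1)^2) (-(1/2) * (y 1)^2) (x 0) := by
    have := (hasDerivAt_const (x 0) (x 1 + y 1)).sub
      (((hasDerivAt_id (x 0)).const_mul (1/2:ℝ)).mul_const ((y 1)^2))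
    exact this.congr_deriv (by ring)
  exact h.deriv

lemma pd_f1x1 (x y : Fin 2 → ℝ) : pd 1 (fun x' => webA 1 x' y) x = 1 := by
  unfold pd webA
  simp only [Matrix.cons_val_one, Matrix.head_cons, Function.update_self,
    Function.update_of_ne (show (0:Fin 2) ≠ 1 by decide)]
  have h : HasDerivAt (fun t:ℝ => t + y 1 - 1/2 * x 0 * (y 1)^2) 1 (x 1) := by
    have := ((hasDerivAt_id (x 1)).add_const (y 1)).sub_const (1/2 * x 0 * (y 1)^2)
    exact this
  exact h.deriv

lemma pd_f1y0 (x y : Fin 2 → ℝ) : pd 0 (fun y' => webA 1 x y') y = 0 := by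
  unfold pd webA
  simp only [Matrix.cons_val_one, Matrix.head_cons, Matrix.cons_val_zero, Function.update_self,
    Function.update_of_ne (show (1:Fin 2) ≠ 0 by decide)]
  exact deriv_const _ _

lemma pd_f1y1 (x y : Fin 2 → ℝ) : pd 1 (fun y' => webA 1 x y') y = 1 - x 0 * y 1 := by
  unfold pd webA
  simp only [Matrix.cons_val_one, Matrix.head_cons, Function.update_self,
    Function.update_of_ne (show (0:Fin 2) ≠ 1 by decide)]
  have h : HasDerivAt (fun t:ℝ => x 1 + t - 1/2 * x 0 * t^2) (1 - x 0 * y 1) (y 1) := by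
    have := (((hasDerivAt_id (y 1)).const_add (x 1))).sub
      ((hasDerivAt_pow 2 (y 1)).const_mul (1/2 * x 0))
    exact this.congr_deriv (by ring)
  exact h.deriv
lemma d2_000 (x y : Fin 2 → ℝ) : d2 webA 0 0 0 x y = 0 := by
  unfold d2
  have h : (fun y' => pd 0 (fun x' => webA 0 x' y') x) = fun y' : Fin 2 → ℝ => 1 + x 0 * y' 1 :=
    funext fun y' => pd_f0x0 x y'
  rw [h]; unfold pd
  simp only [Function.update_of_ne (show (1:Fin 2) ≠ 0 by decide)]
  exact deriv_const _ _

lemma d2_001 (x y : Fin 2 → ℝ) : d2 webA 0 0 1 x y = x 0 := by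
  unfold d2
  have h : (fun y' => pd 0 (fun x' => webA 0 x' y') x) = fun y' : Fin 2 → ℝ => 1 + x 0 * y' 1 :=
    funext fun y' => pd_f0x0 x y'
  rw [h]; unfold pd
  simp only [Function.update_self]
  have : HasDerivAt (fun t:ℝ => 1 + x 0 * t) (x 0) (y 1) := by
    simpa using ((hasDerivAt_id (y 1)).const_mul (x 0)).const_add 1
  exact this.deriv

lemma d2_01m (m : Fin 2) (x y : Fin 2 → ℝ) : d2 webA 0 1 m x y = 0 := by
  unfold d2
  have h : (fun y' => pd 1 (fun x' => webA 0 x' y') x) = fun _ : Fin 2 → ℝ => (0:ℝ) :=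
    funext fun y' => pd_f0x1 x y'
  rw [h]; unfold pd; exact deriv_const _ _

lemma d2_100 (x y : Fin 2 → ℝ) : d2 webA 1 0 0 x y = 0 := by
  unfold d2
  have h : (fun y' => pd 0 (fun x' => webA 1 x' y') x)
      = fun y' : Fin 2 → ℝ => -(1/2) * (y' 1)^2 := funext fun y' => pd_f1x0 x y'
  rw [h]; unfold pd
  simp only [Function.update_of_ne (show (1:Fin 2) ≠ 0 by decide)]
  exact deriv_const _ _

lemma d2_101 (x y : Fin 2 → ℝ) : d2 webA 1 0 1 x y = -(y 1) := by
  unfold d2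
  have h : (fun y' => pd 0 (fun x' => webA 1 x' y') x)
      = fun y' : Fin 2 → ℝ => -(1/2) * (y' 1)^2 := funext fun y' => pd_f1x0 x y'
  rw [h]; unfold pd
  simp only [Function.update_self]
  have : HasDerivAt (fun t:ℝ => -(1/2) * t^2) (-(y 1)) (y 1) := by
    have := (hasDerivAt_pow 2 (y 1)).const_mul (-(1/2):ℝ)
    exact this.congr_deriv (by ring)
  exact this.deriv

lemma d2_11m (m : Fin 2) (x y : Fin 2 → ℝ) : d2 webA 1 1 m x y = 0 := by
  unfold d2
  have h : (fun y' => pd 1 (fun x' => webA 1 x' y') x) = fun _ : Fin 2 → ℝ => (1:ℝ) :=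
    funext fun y' => pd_f1x1 x y'
  rw [h]; unfold pd; exact deriv_const _ _

lemma fbar_webA (x y : Fin 2 → ℝ) :
    fbar webA x y = !![1 + x 0 * y 1, 0; -(1/2) * (y 1)^2, 1] := by
  ext i j
  fin_cases i <;> fin_cases j <;>
    simp [fbar, pd_f0x0, pd_f0x1, pd_f1x0, pd_f1x1]

lemma ftil_webA (x y : Fin 2 → ℝ) :
    ftil webA x y = !![1, 1/2 * (x 0)^2; 0, 1 - x 0 * y 1] := by
  ext i j
  fin_cases i <;> fin_cases j <;>
    simp [ftil, pd_f0y0, pd_f0y1, pd_f1y0, pd_f1y1]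

lemma fbar_inv (x y : Fin 2 → ℝ) (hd : 1 + x 0 * y 1 ≠ 0) :
    (fbar webA x y)⁻¹
      = !![1/(1 + x 0 * y 1), 0; 1/2 * (y 1)^2 / (1 + x 0 * y 1), 1] := by
  rw [fbar_webA]
  apply Matrix.inv_eq_right_inv
  ext i j
  fin_cases i <;> fin_cases j <;>
    simp [Matrix.mul_apply, Fin.sum_univ_two] <;> (try field_simp) <;> (try ring)

lemma ftil_inv (x y : Fin 2 → ℝ) (hd : 1 - x 0 * y 1 ≠ 0) :
    (ftil webA x y)⁻¹
      = !![1, -(1/2) * (x 0)^2 / (1 - x 0 * y 1); 0, 1/(1 - x 0 * y 1)] := by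
  rw [ftil_webA]
  apply Matrix.inv_eq_right_inv
  ext i j
  fin_cases i <;> fin_cases j <;>
    simp [Matrix.mul_apply, Fin.sum_univ_two] <;> (try field_simp) <;> (try ring)

/-- For the web `webA` on the domain `x¹y² ≠ ±1`, with `Δ = 1 + x¹y²`, the
torsion covector is `a₁ = y²/(Δ(2−Δ))`, `a₂ = x¹/(Δ(2−Δ))`; in particular
the web is not isoclinicly geodesic off the set `x¹ = y² = 0`. -/
theorem webA_torsion_covector (x y : Fin 2 → ℝ)
    (h1 : x 0 * y 1 ≠ 1) (h2 : x 0 * y 1 ≠ -1)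
    (Δ : ℝ) (hΔ : Δ = 1 + x 0 * y 1) :
    aCov webA 0 x y = y 1 / (Δ * (2 - Δ)) ∧
    aCov webA 1 x y = x 0 / (Δ * (2 - Δ)) ∧
    (¬ (x 0 = 0 ∧ y 1 = 0) → ¬ (aCov webA 0 x y = 0 ∧ aCov webA 1 x y = 0)) := by
  subst hΔ
  have hd : (1:ℝ) + x 0 * y 1 ≠ 0 := fun h => h2 (by linarith)
  have hd2 : (1:ℝ) - x 0 * y 1 ≠ 0 := fun h => h1 (by linarith)
  have hD : (1 + x 0 * y 1) * (2 - (1 + x 0 * y 1)) ≠ 0 := by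
    apply mul_ne_zero hd; intro h; exact hd2 (by linarith)
  have a0 : aCov webA 0 x y = y 1 / ((1 + x 0 * y 1) * (2 - (1 + x 0 * y 1))) := by
    simp only [aCov, Gam, Fin.sum_univ_two, d2_000, d2_001, d2_01m, d2_100, d2_101, d2_11m,
      fbar_inv x y hd, ftil_inv x y hd2, Matrix.cons_val', Matrix.cons_val_zero,
      Matrix.cons_val_one, Matrix.head_cons, Matrix.head_fin_const, Matrix.empty_val',
      Matrix.cons_val_fin_one, Matrix.of_apply]
    have e : 2 - (1 + x 0 * y 1) = 1 - x 0 * y 1 := by ring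
    rw [e]
    field_simp
    ring
  have a1 : aCov webA 1 x y = x 0 / ((1 + x 0 * y 1) * (2 - (1 + x 0 * y 1))) := by
    simp only [aCov, Gam, Fin.sum_univ_two, d2_000, d2_001, d2_01m, d2_100, d2_101, d2_11m,
      fbar_inv x y hd, ftil_inv x y hd2, Matrix.cons_val', Matrix.cons_val_zero,
      Matrix.cons_val_one, Matrix.head_cons, Matrix.head_fin_const, Matrix.empty_val',
      Matrix.cons_val_fin_one, Matrix.of_apply]
    have e : 2 - (1 + x 0 * y 1) = 1 - x 0 * y 1 := by ring
    rw [e]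
    field_simp
    ring
  refine ⟨a0, a1, ?_⟩
  intro h hc
  apply h
  constructor
  · have := hc.2; rw [a1, div_eq_zero_iff] at this
    exact this.resolve_right hD
  · have := hc.1; rw [a0, div_eq_zero_iff] at this
    exact this.resolve_right hD

end
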